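/- Define x_1 = e_1, y_1 = -e_1 and, for 2 ≤ j ≤ k-1, x_j = (e_{2j-2} + √(j²-1) e_{2j-1})/j and y_j = (e_{2j-2} - √(j²-1) e_{2j-1})/j in ℝ^{2k-3}, where {e_i} is the standard orthonormal basis. Then X = {x_1, y_1, ..., x_{k-1}, y_{k-1}} is a locally two-distance set (each point sees at most two distinct distances) which is a k-distance set (exactly k distinct distances occur in total). -/

import Mathlib

open scoped Classical
open EuclideanSpace
set_option maxHeartbeats 1000000


/-- `A_X(x)`: the set of distances from `x` to the other points of `X`. -/
noncomputable def distancesFrom {d : ℕ} (X : Finset (EuclideanSpace ℝ (Fin d)))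
    (x : EuclideanSpace ℝ (Fin d)) : Finset ℝ :=
  (X.erase x).image (fun y => dist x y)

/-- `A(X)`: the set of distances between distinct points of `X`. -/
noncomputable def distSet {d : ℕ} (X : Finset (EuclideanSpace ℝ (Fin d))) : Finset ℝ :=
  X.offDiag.image (fun p => dist p.1 p.2)

/-- The points `x_j` (for `s = 1`) and `y_j` (for `s = -1`) of the example:
`x_1 = e_1`, `y_1 = -e_1`, and for `j ≥ 2`,
`x_j = (e_{2j-2} + √(j²-1) e_{2j-1})/j`, `y_j = (e_{2j-2} - √(j²-1) e_{2j-1})/j`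
(indices of standard basis vectors are 1-based; coordinates below are 0-based). -/
noncomputable def examplePoint (k j : ℕ) (s : ℝ) : EuclideanSpace ℝ (Fin (2 * k - 3)) :=
  if j = 1 then WithLp.toLp 2 (fun i : Fin (2 * k - 3) => if (i : ℕ) = 0 then s else 0)
  else WithLp.toLp 2 (fun i : Fin (2 * k - 3) => if (i : ℕ) = 2 * j - 3 then 1 / (j : ℝ)
    else if (i : ℕ) = 2 * j - 2 then s * Real.sqrt ((j : ℝ) ^ 2 - 1) / (j : ℝ) else 0)

lemma pt1_repr (k : ℕ) (hk : 3 ≤ k) (s : ℝ) :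
    examplePoint k 1 s = EuclideanSpace.single (⟨0, by omega⟩ : Fin (2 * k - 3)) s := by
  ext i
  simp only [examplePoint, if_pos rfl, PiLp.toLp_apply]
  rw [EuclideanSpace.single_apply]
  by_cases h : (i : ℕ) = 0
  · simp [h, Fin.ext_iff]
  · simp [h, Fin.ext_iff]

lemma pt_repr (k j : ℕ) (hk : 3 ≤ k) (hj2 : 2 ≤ j) (hjk : j ≤ k - 1) (s : ℝ) :
    examplePoint k j s =
      EuclideanSpace.single (⟨2 * j - 3, by omega⟩ : Fin (2 * k - 3)) (1 / (j : ℝ)) +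
      EuclideanSpace.single (⟨2 * j - 2, by omega⟩ : Fin (2 * k - 3))
        (s * Real.sqrt ((j : ℝ) ^ 2 - 1) / (j : ℝ)) := by
  have hj1 : j ≠ 1 := by omega
  ext i
  have : (EuclideanSpace.single (⟨2 * j - 3, by omega⟩ : Fin (2 * k - 3)) (1 / (j : ℝ)) +
      EuclideanSpace.single (⟨2 * j - 2, by omega⟩ : Fin (2 * k - 3))
        (s * Real.sqrt ((j : ℝ) ^ 2 - 1) / (j : ℝ))) i =
      (if (i : ℕ) = 2 * j - 3 then (1/(j:ℝ)) else 0) +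
      (if (i : ℕ) = 2 * j - 2 then s * Real.sqrt ((j : ℝ) ^ 2 - 1) / (j : ℝ) else 0) := by
    rw [PiLp.add_apply, EuclideanSpace.single_apply, EuclideanSpace.single_apply]
    simp [Fin.ext_iff]
  rw [this]
  simp only [examplePoint, if_neg hj1, PiLp.toLp_apply]
  have hne : 2 * j - 3 ≠ 2 * j - 2 := by omega
  by_cases h1 : (i : ℕ) = 2 * j - 3
  · have h2 : (i : ℕ) ≠ 2 * j - 2 := by omega
    simp [h1, h2, hne]
  · by_cases h2 : (i : ℕ) = 2 * j - 2 <;> simp [h1, h2, hne, hne.symm]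

lemma inner_single_single' {d : ℕ} (i i' : Fin d) (a b : ℝ) :
    inner ℝ (EuclideanSpace.single i a) (EuclideanSpace.single i' b) =
      if i = i' then a * b else 0 := by
  rw [EuclideanSpace.inner_single_left, EuclideanSpace.single_apply]
  simp only [starRingEnd_apply, star_trivial]
  by_cases h : i = i'
  · simp [h]
  · simp [h, Ne.symm h]

noncomputable def Eval (j : ℕ) : ℝ := if j = 1 then 4 else 4 * ((j:ℝ)^2 - 1) / (j:ℝ)^2

lemma inner_pts (k j j' : ℕ) (hk : 3 ≤ k) (hj : 1 ≤ j) (hjk : j ≤ k - 1)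
    (hj' : 1 ≤ j') (hj'k : j' ≤ k - 1) (s s' : ℝ)
    (hs : s = 1 ∨ s = -1) (hs' : s' = 1 ∨ s' = -1) :
    inner ℝ (examplePoint k j s) (examplePoint k j' s') =
      if j = j' then (if s = s' then (1:ℝ) else 1 - Eval j / 2) else 0 := by
  rcases Nat.lt_or_ge j 2 with hj2 | hj2
  · have hj1 : j = 1 := by omega
    subst hj1
    rcases Nat.lt_or_ge j' 2 with hj'2 | hj'2
    · have hj'1 : j' = 1 := by omega
      subst hj'1
      rw [pt1_repr k hk, pt1_repr k hk, inner_single_single']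
      simp only [if_pos rfl, Eval, if_pos rfl]
      rcases hs with rfl | rfl <;> rcases hs' with rfl | rfl <;> norm_num
    · have hne : (1:ℕ) ≠ j' := by omega
      rw [pt1_repr k hk, pt_repr k j' hk hj'2 hj'k, inner_add_right,
        inner_single_single', inner_single_single', if_neg hne]
      have h1 : (⟨0, by omega⟩ : Fin (2*k-3)) ≠ ⟨2*j'-3, by omega⟩ := by
        simp [Fin.ext_iff]; omega
      have h2 : (⟨0, by omega⟩ : Fin (2*k-3)) ≠ ⟨2*j'-2, by omega⟩ := by
        simp [Fin.ext_iff]; omega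
      rw [if_neg h1, if_neg h2]; norm_num
  · rcases Nat.lt_or_ge j' 2 with hj'2 | hj'2
    · have hj'1 : j' = 1 := by omega
      subst hj'1
      have hne : j ≠ 1 := by omega
      rw [pt1_repr k hk, pt_repr k j hk hj2 hjk, inner_add_left,
        inner_single_single', inner_single_single', if_neg hne]
      have h1 : (⟨2*j-3, by omega⟩ : Fin (2*k-3)) ≠ ⟨0, by omega⟩ := by
        simp [Fin.ext_iff]; omega
      have h2 : (⟨2*j-2, by omega⟩ : Fin (2*k-3)) ≠ ⟨0, by omega⟩ := by
        simp [Fin.ext_iff]; omega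
      rw [if_neg h1, if_neg h2]; norm_num
    · rw [pt_repr k j hk hj2 hjk, pt_repr k j' hk hj'2 hj'k, inner_add_left,
        inner_add_right, inner_add_right, inner_single_single', inner_single_single',
        inner_single_single', inner_single_single']
      by_cases hjj : j = j'
      · subst hjj
        have e1 : ((⟨2*j-3, by omega⟩ : Fin (2*k-3)) = ⟨2*j-3, by omega⟩) := rfl
        have e2 : ((⟨2*j-2, by omega⟩ : Fin (2*k-3)) = ⟨2*j-2, by omega⟩) := rfl
        have n1 : ((⟨2*j-3, by omega⟩ : Fin (2*k-3)) ≠ ⟨2*j-2, by omega⟩) := by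
          simp [Fin.ext_iff]; omega
        rw [if_pos e1, if_pos e2, if_neg n1, if_neg n1.symm, if_pos rfl]
        have hj0 : (j:ℝ) ≠ 0 := by positivity
        have hsq : Real.sqrt ((j:ℝ)^2-1) * Real.sqrt ((j:ℝ)^2-1) = (j:ℝ)^2 - 1 := by
          apply Real.mul_self_sqrt
          have : (1:ℝ) ≤ (j:ℝ) := by exact_mod_cast hj
          nlinarith
        have hEj : Eval j = 4 * ((j:ℝ)^2 - 1) / (j:ℝ)^2 := by
          simp only [Eval, if_neg (show j ≠ 1 by omega)]
        by_cases hss : s = s'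
        · subst hss
          rw [if_pos rfl]
          have hs1 : s * s = 1 := by rcases hs with rfl | rfl <;> norm_num
          field_simp
          nlinarith [hsq]
        · rw [if_neg hss, hEj]
          have hs1 : s * s' = -1 := by
            rcases hs with rfl | rfl <;> rcases hs' with rfl | rfl <;> simp_all <;> norm_num
          have key : s * Real.sqrt ((j:ℝ)^2-1) * (s' * Real.sqrt ((j:ℝ)^2-1))
              = 1 - (j:ℝ)^2 := by
            calc s * Real.sqrt ((j:ℝ)^2-1) * (s' * Real.sqrt ((j:ℝ)^2-1))
                = (s * s') * (Real.sqrt ((j:ℝ)^2-1) * Real.sqrt ((j:ℝ)^2-1)) := by ring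
              _ = 1 - (j:ℝ)^2 := by rw [hs1, hsq]; ring
          field_simp
          nlinarith [key]
      · have n1 : ((⟨2*j-3, by omega⟩ : Fin (2*k-3)) ≠ ⟨2*j'-3, by omega⟩) := by
          simp [Fin.ext_iff]; omega
        have n2 : ((⟨2*j-3, by omega⟩ : Fin (2*k-3)) ≠ ⟨2*j'-2, by omega⟩) := by
          simp [Fin.ext_iff]; omega
        have n3 : ((⟨2*j-2, by omega⟩ : Fin (2*k-3)) ≠ ⟨2*j'-3, by omega⟩) := by
          simp [Fin.ext_iff]; omega
        have n4 : ((⟨2*j-2, by omega⟩ : Fin (2*k-3)) ≠ ⟨2*j'-2, by omega⟩) := by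
          simp [Fin.ext_iff]; omega
        rw [if_neg n1, if_neg n2, if_neg n3, if_neg n4, if_neg hjj]
        norm_num

lemma Eval_nonneg (j : ℕ) (hj : 1 ≤ j) : 0 ≤ Eval j := by
  have h1 : (1:ℝ) ≤ (j:ℝ) := by exact_mod_cast hj
  unfold Eval
  split_ifs
  · norm_num
  · apply div_nonneg
    · nlinarith
    · positivity

lemma dist_pts (k j j' : ℕ) (hk : 3 ≤ k) (hj : 1 ≤ j) (hjk : j ≤ k - 1)
    (hj' : 1 ≤ j') (hj'k : j' ≤ k - 1) (s s' : ℝ)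
    (hs : s = 1 ∨ s = -1) (hs' : s' = 1 ∨ s' = -1) :
    dist (examplePoint k j s) (examplePoint k j' s') =
      if j = j' then (if s = s' then 0 else Real.sqrt (Eval j)) else Real.sqrt 2 := by
  have hxx : inner ℝ (examplePoint k j s) (examplePoint k j s) = (1:ℝ) := by
    rw [inner_pts k j j hk hj hjk hj hjk s s hs hs]; simp
  have hyy : inner ℝ (examplePoint k j' s') (examplePoint k j' s') = (1:ℝ) := by
    rw [inner_pts k j' j' hk hj' hj'k hj' hj'k s' s' hs' hs']; simp
  have hxy := inner_pts k j j' hk hj hjk hj' hj'k s s' hs hs'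
  rw [dist_eq_norm, norm_eq_sqrt_real_inner, real_inner_sub_sub_self, hxx, hxy, hyy]
  by_cases hjj : j = j'
  · subst hjj
    by_cases hss : s = s'
    · subst hss; norm_num
    · simp only [if_pos rfl, if_neg hss, if_true]
      congr 1
      ring
  · simp only [if_neg hjj]
    norm_num

lemma two_lt_Eval (j : ℕ) (hj : 1 ≤ j) : 2 < Eval j := by
  unfold Eval
  split_ifs with h
  · norm_num
  · have h2 : 2 ≤ j := by omega
    have h2' : (2:ℝ) ≤ (j:ℝ) := by exact_mod_cast h2
    rw [lt_div_iff₀ (by positivity)]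
    nlinarith

lemma Eval_inj (a b : ℕ) (ha : 1 ≤ a) (hb : 1 ≤ b) (h : Eval a = Eval b) : a = b := by
  have haR : (1:ℝ) ≤ (a:ℝ) := by exact_mod_cast ha
  have hbR : (1:ℝ) ≤ (b:ℝ) := by exact_mod_cast hb
  unfold Eval at h
  by_cases ha1 : a = 1 <;> by_cases hb1 : b = 1
  · omega
  · rw [if_pos ha1, if_neg hb1, eq_div_iff (by positivity : ((b:ℝ)^2) ≠ 0)] at h
    nlinarith
  · rw [if_neg ha1, if_pos hb1, div_eq_iff (by positivity : ((a:ℝ)^2) ≠ 0)] at h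
    nlinarith
  · rw [if_neg ha1, if_neg hb1, div_eq_div_iff (by positivity) (by positivity)] at h
    have : (a:ℝ) = (b:ℝ) := by
      apply le_antisymm <;> nlinarith
    exact_mod_cast this

/-- The set `X = {x_1, y_1, …, x_{k-1}, y_{k-1}} ⊆ ℝ^{2k-3}` is a locally two-distance set
which is a `k`-distance set. -/
theorem stmt15 (k : ℕ) (hk : 3 ≤ k) :
    (∀ x ∈ ((Finset.Icc 1 (k - 1)) ×ˢ ({(1 : ℝ), -1} : Finset ℝ)).image
        (fun p => examplePoint k p.1 p.2),
      (distancesFrom (((Finset.Icc 1 (k - 1)) ×ˢ ({(1 : ℝ), -1} : Finset ℝ)).image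
        (fun p => examplePoint k p.1 p.2)) x).card ≤ 2) ∧
    (distSet (((Finset.Icc 1 (k - 1)) ×ˢ ({(1 : ℝ), -1} : Finset ℝ)).image
        (fun p => examplePoint k p.1 p.2))).card = k := by
  have hmemS : ∀ p : ℕ × ℝ, p ∈ (Finset.Icc 1 (k-1)) ×ˢ ({(1:ℝ),-1} : Finset ℝ) ↔
      (1 ≤ p.1 ∧ p.1 ≤ k-1) ∧ (p.2 = 1 ∨ p.2 = -1) := by
    intro p
    simp [Finset.mem_product, Finset.mem_Icc]
  constructor
  · intro x hx
    rw [Finset.mem_image] at hx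
    obtain ⟨p, hp, rfl⟩ := hx
    rw [hmemS] at hp
    obtain ⟨⟨hp1, hp2⟩, hps⟩ := hp
    have hsub : distancesFrom (((Finset.Icc 1 (k - 1)) ×ˢ ({(1 : ℝ), -1} : Finset ℝ)).image
        (fun p => examplePoint k p.1 p.2)) (examplePoint k p.1 p.2) ⊆
        {Real.sqrt 2, Real.sqrt (Eval p.1)} := by
      intro t ht
      rw [distancesFrom, Finset.mem_image] at ht
      obtain ⟨y, hy, rfl⟩ := ht
      rw [Finset.mem_erase] at hy
      obtain ⟨hyne, hy2⟩ := hy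
      rw [Finset.mem_image] at hy2
      obtain ⟨q, hq, rfl⟩ := hy2
      rw [hmemS] at hq
      obtain ⟨⟨hq1, hq2⟩, hqs⟩ := hq
      rw [dist_pts k p.1 q.1 hk hp1 hp2 hq1 hq2 p.2 q.2 hps hqs]
      by_cases hjj : p.1 = q.1
      · by_cases hss : p.2 = q.2
        · exact absurd (by rw [← hjj, ← hss]) hyne
        · rw [if_pos hjj, if_neg hss]
          exact Finset.mem_insert_of_mem (Finset.mem_singleton_self _)
      · rw [if_neg hjj]
        exact Finset.mem_insert_self _ _
    refine (Finset.card_le_card hsub).trans ?_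
    refine (Finset.card_insert_le _ _).trans ?_
    simp
  · have hnotmem : Real.sqrt 2 ∉ (Finset.Icc 1 (k-1)).image (fun j => Real.sqrt (Eval j)) := by
      rw [Finset.mem_image]
      rintro ⟨j, hj, hjeq⟩
      have hj1 : 1 ≤ j := (Finset.mem_Icc.mp hj).1
      have h2 : Real.sqrt 2 < Real.sqrt (Eval j) :=
        Real.sqrt_lt_sqrt (by norm_num) (two_lt_Eval j hj1)
      linarith [hjeq.ge, hjeq.le]
    have hinj : Set.InjOn (fun j => Real.sqrt (Eval j)) (Finset.Icc 1 (k-1)) := by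
      intro a ha b hb hab
      have ha1 := (Finset.mem_Icc.mp ha).1
      have hb1 := (Finset.mem_Icc.mp hb).1
      exact Eval_inj a b ha1 hb1
        ((Real.sqrt_inj (Eval_nonneg a ha1) (Eval_nonneg b hb1)).mp hab)
    have hXeq : distSet (((Finset.Icc 1 (k - 1)) ×ˢ ({(1 : ℝ), -1} : Finset ℝ)).image
        (fun p => examplePoint k p.1 p.2)) =
        insert (Real.sqrt 2) ((Finset.Icc 1 (k-1)).image (fun j => Real.sqrt (Eval j))) := by
      apply Finset.ext
      intro t
      constructor
      · intro ht
        rw [distSet, Finset.mem_image] at ht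
        obtain ⟨p, hp, rfl⟩ := ht
        rw [Finset.mem_offDiag] at hp
        obtain ⟨h1, h2, hne⟩ := hp
        rw [Finset.mem_image] at h1 h2
        obtain ⟨a, haS, ha⟩ := h1
        obtain ⟨b, hbS, hb⟩ := h2
        rw [hmemS] at haS hbS
        rw [← ha, ← hb,
          dist_pts k a.1 b.1 hk haS.1.1 haS.1.2 hbS.1.1 hbS.1.2 a.2 b.2 haS.2 hbS.2]
        by_cases hjj : a.1 = b.1
        · by_cases hss : a.2 = b.2
          · exact absurd (by rw [← ha, ← hb, hjj, hss]) hne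
          · rw [if_pos hjj, if_neg hss]
            exact Finset.mem_insert_of_mem (Finset.mem_image.mpr
              ⟨a.1, Finset.mem_Icc.mpr ⟨haS.1.1, haS.1.2⟩, rfl⟩)
        · rw [if_neg hjj]
          exact Finset.mem_insert_self _ _
      · intro ht
        rw [Finset.mem_insert] at ht
        have hd12 := dist_pts k 1 2 hk (by omega) (by omega) (by omega) (by omega)
          1 1 (Or.inl rfl) (Or.inl rfl)
        rw [if_neg (by omega)] at hd12
        rcases ht with rfl | ht
        · rw [distSet, Finset.mem_image]
          refine ⟨(examplePoint k 1 1, examplePoint k 2 1), ?_, hd12⟩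
          rw [Finset.mem_offDiag]
          refine ⟨Finset.mem_image.mpr ⟨(1,1), (hmemS (1,1)).mpr ⟨⟨le_refl 1, by omega⟩, Or.inl rfl⟩, rfl⟩,
            Finset.mem_image.mpr ⟨(2,1), (hmemS (2,1)).mpr ⟨⟨by omega, by omega⟩, Or.inl rfl⟩, rfl⟩, ?_⟩
          intro heq
          have heq' : examplePoint k 1 1 = examplePoint k 2 1 := heq
          rw [heq', dist_self] at hd12
          have : (0:ℝ) < Real.sqrt 2 := Real.sqrt_pos.mpr (by norm_num)
          linarith [hd12.ge, hd12.le]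
        · obtain ⟨j, hj, rfl⟩ := Finset.mem_image.mp ht
          have hj1 := (Finset.mem_Icc.mp hj).1
          have hj2 := (Finset.mem_Icc.mp hj).2
          have hdj := dist_pts k j j hk hj1 hj2 hj1 hj2 1 (-1) (Or.inl rfl) (Or.inr rfl)
          rw [if_pos rfl, if_neg (by norm_num)] at hdj
          rw [distSet, Finset.mem_image]
          refine ⟨(examplePoint k j 1, examplePoint k j (-1)), ?_, hdj⟩
          rw [Finset.mem_offDiag]
          refine ⟨Finset.mem_image.mpr ⟨(j,1), (hmemS (j,1)).mpr ⟨⟨hj1, hj2⟩, Or.inl rfl⟩, rfl⟩,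
            Finset.mem_image.mpr ⟨(j,-1), (hmemS (j,-1)).mpr ⟨⟨hj1, hj2⟩, Or.inr rfl⟩, rfl⟩, ?_⟩
          intro heq
          have heq' : examplePoint k j 1 = examplePoint k j (-1) := heq
          rw [heq', dist_self] at hdj
          have : (0:ℝ) < Real.sqrt (Eval j) := Real.sqrt_pos.mpr (by linarith [two_lt_Eval j hj1])
          linarith [hdj.ge, hdj.le]
    rw [hXeq, Finset.card_insert_of_notMem hnotmem, Finset.card_image_of_injOn hinj,
      Nat.card_Icc]
    omega
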